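/- Let G = K_{n₁,n₂,…,n_m} be a complete m-partite graph with partite sets V₁, V₂, …, V_m where n₁ ≥ n₂ ≥ ⋯ ≥ n_m and m ≥ 2. Then GC(G) ≥ n₁ + n_m. -/
import Mathlib

open SimpleGraph Finset

variable {V : Type*} [Fintype V] [DecidableEq V]

/-- `S` is a dominating set of the graph `G`. -/
def IsDomSet (G : SimpleGraph V) (S : Finset V) : Prop :=
  ∀ v : V, v ∈ S ∨ ∃ u ∈ S, G.Adj u v

/-- `S` is a global dominating set of `G`: it dominates both `G` and its complement. -/
def IsGlobalDomSet (G : SimpleGraph V) (S : Finset V) : Prop :=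
  IsDomSet G S ∧ IsDomSet Gᶜ S

/-- Disjoint sets `A` and `B` form a global coalition in `G`. -/
def IsGlobalCoalition (G : SimpleGraph V) (A B : Finset V) : Prop :=
  Disjoint A B ∧ ¬ IsGlobalDomSet G A ∧ ¬ IsGlobalDomSet G B ∧ IsGlobalDomSet G (A ∪ B)

/-- `π` is a global coalition partition (gc-partition) of `G`. -/
def IsGCPartition (G : SimpleGraph V) (π : Finpartition (Finset.univ : Finset V)) : Prop :=
  ∀ A ∈ π.parts, ¬ IsGlobalDomSet G A ∧ ∃ B ∈ π.parts, B ≠ A ∧ IsGlobalCoalition G A B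

/-- The global coalition number `GC(G)`: the maximum number of parts in a gc-partition of `G`. -/
noncomputable def globalCoalitionNumber (G : SimpleGraph V) : ℕ :=
  sSup {n | ∃ π : Finpartition (Finset.univ : Finset V), IsGCPartition G π ∧ π.parts.card = n}

section Aux

variable {m : ℕ} {n : Fin m → ℕ}

/-- A set meeting every partite class is a global dominating set. -/
lemma aux_global_of_reps (hm : 2 ≤ m) (S : Finset ((i : Fin m) × Fin (n i)))
    (h : ∀ i : Fin m, ∃ u ∈ S, u.1 = i) :
    IsGlobalDomSet (completeMultipartiteGraph (fun i : Fin m => Fin (n i))) S := by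
  have : Nontrivial (Fin m) := Fin.nontrivial_iff_two_le.mpr hm
  constructor
  · intro v
    obtain ⟨i, hi⟩ := exists_ne v.1
    obtain ⟨u, huS, hu⟩ := h i
    exact Or.inr ⟨u, huS, by simpa [hu] using hi⟩
  · intro v
    obtain ⟨u, huS, hu⟩ := h v.1
    by_cases huv : u = v
    · exact Or.inl (huv ▸ huS)
    · exact Or.inr ⟨u, huS, by simp [compl_adj, huv, hu]⟩

/-- A set missing some partite class is not a global dominating set. -/
lemma aux_not_global (hpos : ∀ i, 1 ≤ n i) (S : Finset ((i : Fin m) × Fin (n i)))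
    (i : Fin m) (h : ∀ u ∈ S, u.1 ≠ i) :
    ¬ IsGlobalDomSet (completeMultipartiteGraph (fun i : Fin m => Fin (n i))) S := by
  rintro ⟨-, hdom⟩
  set v : (i : Fin m) × Fin (n i) := ⟨i, ⟨0, hpos i⟩⟩ with hv
  rcases hdom v with hvS | ⟨u, huS, hadj⟩
  · exact h v hvS rfl
  · rw [compl_adj] at hadj
    exact h u huS (by simpa using hadj.2)

end Aux

theorem gc_completeMultipartiteGraph (m : ℕ) (hm : 2 ≤ m) (n : Fin m → ℕ)
    (hpos : ∀ i, 1 ≤ n i) (hanti : Antitone n) :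
    n ⟨0, by omega⟩ + n ⟨m - 1, by omega⟩ ≤
      globalCoalitionNumber (completeMultipartiteGraph (fun i : Fin m => Fin (n i))) := by
  set i0 : Fin m := ⟨0, by omega⟩ with hi0
  set i1 : Fin m := ⟨m - 1, by omega⟩ with hi1
  have hne01 : i0 ≠ i1 := Fin.ne_of_val_ne (show (0 : ℕ) ≠ m - 1 by omega)
  have hle1 : ∀ i : Fin m, n i1 ≤ n i := by
    intro i
    exact hanti (Fin.le_def.mpr (show (i : ℕ) ≤ m - 1 by have := i.isLt; omega))
  set k : ℕ := n i0 + n i1 with hk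
  have h1pos := hpos i1
  have h0pos := hpos i0
  set G := completeMultipartiteGraph (fun i : Fin m => Fin (n i)) with hG
  set c : ((i : Fin m) × Fin (n i)) → ℕ :=
    fun v => if v.1 = i0 then (v.2 : ℕ) else n i0 + min (v.2 : ℕ) (n i1 - 1) with hc
  have hclt : ∀ v, c v < k := by
    rintro ⟨iv, a⟩
    simp only [hc]
    split
    · next h =>
      subst h
      have := a.isLt
      omega
    · omega
  -- representatives
  set repL : ℕ → ((i : Fin m) × Fin (n i)) :=
    fun j => ⟨i0, ⟨j % n i0, Nat.mod_lt _ h0pos⟩⟩ with hrepLdef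
  set repR : Fin m → ℕ → ((i : Fin m) × Fin (n i)) :=
    fun i t => ⟨i, ⟨t % n i, Nat.mod_lt _ (hpos i)⟩⟩ with hrepRdef
  have hrepL : ∀ j < n i0, c (repL j) = j := by
    intro j hj
    simp only [hrepLdef, hc, if_pos]
    exact Nat.mod_eq_of_lt hj
  have hrepR : ∀ i : Fin m, i ≠ i0 → ∀ j, n i0 ≤ j → j < k → c (repR i (j - n i0)) = j := by
    intro i hi j hj1 hj2
    have ht : j - n i0 < n i := lt_of_lt_of_le (by omega) (hle1 i)
    simp only [hrepRdef, hc, if_neg hi]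
    rw [Nat.mod_eq_of_lt ht]
    omega
  have hsurj : ∀ j < k, ∃ v, c v = j := by
    intro j hj
    by_cases hjn : j < n i0
    · exact ⟨_, hrepL j hjn⟩
    · exact ⟨_, hrepR i1 hne01.symm j (by omega) hj⟩
  -- the fibers
  set fib : ℕ → Finset ((i : Fin m) × Fin (n i)) :=
    fun j => univ.filter (fun v => c v = j) with hfib
  have hmemfib : ∀ j v, v ∈ fib j ↔ c v = j := by
    intro j v; simp [hfib]
  have hfibne : ∀ j < k, (fib j).Nonempty := by
    intro j hj
    obtain ⟨v, hv⟩ := hsurj j hj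
    exact ⟨v, (hmemfib j v).2 hv⟩
  have hdisj : ∀ j j', j ≠ j' → Disjoint (fib j) (fib j') := by
    intro j j' hne
    rw [Finset.disjoint_left]
    intro v hv hv'
    rw [hmemfib] at hv hv'
    exact hne (hv ▸ hv')
  have hinj : Set.InjOn fib (Finset.range k) := by
    intro j hj j' hj' hee
    by_contra hne
    obtain ⟨v, hv⟩ := hfibne j (by simpa using hj)
    exact (Finset.disjoint_left.1 (hdisj j j' hne)) hv (hee ▸ hv)
  -- fiber structure
  have hfibL : ∀ j < n i0, ∀ v ∈ fib j, v.1 = i0 := by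
    intro j hj v hv
    rw [hmemfib] at hv
    by_contra hne
    simp only [hc, if_neg hne] at hv
    omega
  have hfibR : ∀ j, n i0 ≤ j → ∀ v ∈ fib j, v.1 ≠ i0 := by
    rintro j hj ⟨iv, a⟩ hv hvi
    simp only at hvi
    subst hvi
    rw [hmemfib] at hv
    simp only [hc, if_pos] at hv
    have := a.isLt
    omega
  -- key unions are globally dominating
  have hunion : ∀ j < n i0, ∀ j', n i0 ≤ j' → j' < k →
      IsGlobalDomSet G (fib j ∪ fib j') := by
    intro j hj j' hj1 hj2
    apply aux_global_of_reps hm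
    intro i
    by_cases hi : i = i0
    · refine ⟨repL j, ?_, by rw [hi]⟩
      rw [Finset.mem_union, hmemfib]
      exact Or.inl (hrepL j hj)
    · refine ⟨repR i (j' - n i0), ?_, rfl⟩
      rw [Finset.mem_union, hmemfib, hmemfib]
      exact Or.inr (hrepR i hi j' hj1 hj2)
  have hnotL : ∀ j < n i0, ¬ IsGlobalDomSet G (fib j) := by
    intro j hj
    refine aux_not_global hpos _ i1 (fun u hu => ?_)
    rw [hfibL j hj u hu]
    exact hne01
  have hnotR : ∀ j, n i0 ≤ j → ¬ IsGlobalDomSet G (fib j) := by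
    intro j hj
    exact aux_not_global hpos _ i0 (hfibR j hj)
  have hn0k : n i0 < k := by omega
  have h0k : 0 < k := by omega
  have hmem : ∀ j < k, fib j ∈ (Finset.range k).image fib := by
    intro j hj
    exact Finset.mem_image_of_mem fib (Finset.mem_range.2 hj)
  -- build the partition
  set π : Finpartition (Finset.univ : Finset ((i : Fin m) × Fin (n i))) :=
    { parts := (Finset.range k).image fib
      supIndep := by
        rw [Finset.supIndep_iff_pairwiseDisjoint]
        intro A hA B hB hAB
        simp only [Finset.coe_image, Set.mem_image, Finset.mem_coe, Finset.mem_range] at hA hB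
        obtain ⟨j, hj, rfl⟩ := hA
        obtain ⟨j', hj', rfl⟩ := hB
        exact hdisj j j' (fun h => hAB (h ▸ rfl))
      sup_parts := by
        apply Finset.Subset.antisymm
        · intro v hv; exact Finset.mem_univ v
        · intro v _
          rw [Finset.mem_sup]
          exact ⟨fib (c v), hmem _ (hclt v), (hmemfib _ v).2 rfl⟩
      bot_notMem := by
        simp only [Finset.bot_eq_empty, Finset.mem_image, Finset.mem_range, not_exists]
        rintro j ⟨hj, hjj⟩
        obtain ⟨v, hv⟩ := hfibne j hj
        rw [hjj] at hv
        exact absurd hv (Finset.notMem_empty v) } with hπ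
  have hne_fib : ∀ j < k, ∀ j' < k, j ≠ j' → fib j ≠ fib j' := by
    intro j hj j' hj' hne h
    exact hne (hinj (by simpa using hj) (by simpa using hj') h)
  have hcard : π.parts.card = k := by
    rw [hπ]
    simp only
    rw [Finset.card_image_of_injOn hinj, Finset.card_range]
  have hgc : IsGCPartition G π := by
    intro A hA
    rw [hπ] at hA
    simp only [Finset.mem_image, Finset.mem_range] at hA
    obtain ⟨j, hj, rfl⟩ := hA
    by_cases hjn : j < n i0
    · exact ⟨hnotL j hjn, fib (n i0), hmem _ hn0k,
        hne_fib _ hn0k _ hj (by omega), hdisj j (n i0) (by omega),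
        hnotL j hjn, hnotR _ le_rfl, hunion j hjn _ le_rfl hn0k⟩
    · push_neg at hjn
      have hu := hunion 0 h0pos j hjn hj
      rw [Finset.union_comm] at hu
      exact ⟨hnotR j hjn, fib 0, hmem _ h0k,
        hne_fib _ h0k _ hj (by omega), hdisj j 0 (by omega),
        hnotR j hjn, hnotL 0 h0pos, hu⟩
  have hbdd : BddAbove {N | ∃ π : Finpartition (Finset.univ : Finset ((i : Fin m) × Fin (n i))),
      IsGCPartition G π ∧ π.parts.card = N} := by
    refine ⟨Fintype.card ((i : Fin m) × Fin (n i)), ?_⟩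
    rintro N ⟨π', -, rfl⟩
    simpa using π'.card_parts_le_card
  exact le_csSup hbdd ⟨π, hgc, hcard⟩
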